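/- Let ν, s be complex numbers with Re(s) > |Re(ν)|. Then ∫_{0}^{∞} y^{s−1} · ( ∫_{-∞}^{∞} exp(ν·u − y·cosh(u)) du ) dy = 2^{s−1} · Γ((s+ν)/2) · Γ((s−ν)/2). -/

import Mathlib

open MeasureTheory Complex Set

lemma cpow_real_exp (x : ℝ) (c : ℂ) : ((Real.exp x : ℝ) : ℂ) ^ c = Complex.exp (c * x) := by
  rw [Complex.cpow_def_of_ne_zero (Complex.ofReal_ne_zero.mpr (Real.exp_ne_zero x)),
    ← Complex.ofReal_log (Real.exp_pos x).le, Real.log_exp, mul_comm]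

lemma cpow_real_inv {a : ℝ} (ha : 0 < a) (c : ℂ) :
    ((a⁻¹ : ℝ) : ℂ) ^ c = ((a : ℝ) : ℂ) ^ (-c) := by
  rw [Complex.ofReal_inv, Complex.inv_cpow _ _ (by
    rw [Complex.arg_ofReal_of_nonneg ha.le]; exact Real.pi_ne_zero.symm), ← Complex.cpow_neg]

lemma integrableOn_rpow_mul_exp_neg {σ c : ℝ} (hσ : 0 < σ) (hc : 0 < c) :
    IntegrableOn (fun y : ℝ => y ^ (σ - 1) * Real.exp (-(c * y))) (Ioi (0 : ℝ)) := by
  have h0 := Real.GammaIntegral_convergent hσ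
  have h1 : IntegrableOn (fun y : ℝ => Real.exp (-(c * y)) * (c * y) ^ (σ - 1)) (Ioi (0 : ℝ)) := by
    have := (integrableOn_Ioi_comp_mul_left_iff
      (fun x => Real.exp (-x) * x ^ (σ - 1)) 0 hc).2
    simpa using this (by simpa using h0)
  refine IntegrableOn.congr_fun (h1.const_mul ((c ^ (σ - 1))⁻¹)) (fun y hy => ?_) measurableSet_Ioi
  rw [Real.mul_rpow hc.le (le_of_lt hy)]
  field_simp

lemma integrable_exp_neg_mul_abs {c : ℝ} (hc : 0 < c) :
    Integrable (fun u : ℝ => Real.exp (-(c * |u|))) := by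
  have h1 : IntegrableOn (fun u : ℝ => Real.exp (-(c * |u|))) (Ioi 0) := by
    refine IntegrableOn.congr_fun (exp_neg_integrableOn_Ioi 0 hc)
      (fun x hx => by rw [abs_of_pos hx, neg_mul]) measurableSet_Ioi
  have h2 : IntegrableOn (fun u : ℝ => Real.exp (-(c * |u|))) (Iic 0) := by
    rw [← Measure.map_neg_eq_self (volume : Measure ℝ)]
    have m : MeasurableEmbedding fun x : ℝ => -x := (Homeomorph.neg ℝ).measurableEmbedding
    rw [m.integrableOn_map_iff]
    simp_rw [Function.comp_def, abs_neg, neg_preimage, neg_Iic, neg_zero]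
    exact Iff.mpr integrableOn_Ici_iff_integrableOn_Ioi h1
  rw [← integrableOn_univ, ← Iic_union_Ioi (a := (0:ℝ))]
  exact h2.union h1

lemma beta_Ioi (p q : ℂ) :
    ∫ x in Ioi (0 : ℝ), (x : ℂ) ^ (p - 1) * ((1 + x : ℝ) : ℂ) ^ (-(p + q)) =
      Complex.betaIntegral p q := by
  have himg : (fun t : ℝ => t / (1 - t)) '' Ioo 0 1 = Ioi (0 : ℝ) := by
    ext x
    constructor
    · rintro ⟨t, ⟨ht0, ht1⟩, rfl⟩
      exact div_pos ht0 (by linarith)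
    · intro hx
      refine ⟨x / (1 + x), ⟨div_pos hx (by linarith [mem_Ioi.mp hx]), ?_⟩, ?_⟩
      · rw [div_lt_one (by linarith [mem_Ioi.mp hx])]; linarith [mem_Ioi.mp hx]
      · have h1 : (0:ℝ) < 1 + x := by linarith [mem_Ioi.mp hx]
        field_simp
        ring
  have hderiv : ∀ t ∈ Ioo (0:ℝ) 1,
      HasDerivWithinAt (fun t : ℝ => t / (1 - t)) (((1 - t) ^ 2)⁻¹) (Ioo 0 1) t := by
    intro t ht
    have h1t : (1:ℝ) - t ≠ 0 := by have := ht.2; intro hh; nlinarith [ht.1]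
    have := (hasDerivAt_id t).div ((hasDerivAt_id t).const_sub 1) h1t
    refine this.hasDerivWithinAt.congr_deriv ?_
    simp only [id]; field_simp; ring
  have hinj : InjOn (fun t : ℝ => t / (1 - t)) (Ioo 0 1) := by
    intro a ha b hb hab
    have h1a : (1:ℝ) - a ≠ 0 := by have := ha.2; intro hh; nlinarith [ha.1]
    have h1b : (1:ℝ) - b ≠ 0 := by have := hb.2; intro hh; nlinarith [hb.1]
    field_simp at hab
    nlinarith [hab]
  have key := integral_image_eq_integral_abs_deriv_smul measurableSet_Ioo hderiv hinj
    (fun x : ℝ => (x : ℂ) ^ (p - 1) * ((1 + x : ℝ) : ℂ) ^ (-(p + q)))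
  rw [himg] at key
  rw [key, Complex.betaIntegral, intervalIntegral.integral_of_le zero_le_one,
    integral_Ioc_eq_integral_Ioo]
  refine setIntegral_congr_fun measurableSet_Ioo (fun t ht => ?_)
  obtain ⟨ht0, ht1⟩ := ht
  have h1t : (0:ℝ) < 1 - t := by linarith
  have hz : ((1 - t : ℝ) : ℂ) ≠ 0 := Complex.ofReal_ne_zero.mpr h1t.ne'
  have e1 : t / (1 - t) = t * (1 - t)⁻¹ := div_eq_mul_inv _ _
  have e2 : 1 + t * (1 - t)⁻¹ = (1 - t)⁻¹ := by field_simp; ring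
  have e3 : ((t * (1 - t)⁻¹ : ℝ) : ℂ) ^ (p - 1)
      = (t : ℂ) ^ (p - 1) * ((1 - t : ℝ) : ℂ) ^ (-(p - 1)) := by
    rw [Complex.ofReal_mul, Complex.mul_cpow_ofReal_nonneg ht0.le (inv_nonneg.mpr h1t.le),
      cpow_real_inv h1t]
  have e4 : (((1 - t)⁻¹ : ℝ) : ℂ) ^ (-(p + q)) = ((1 - t : ℝ) : ℂ) ^ (p + q) := by
    rw [cpow_real_inv h1t, neg_neg]
  have e5 : |((1 - t) ^ 2)⁻¹| = ((1 - t) ^ 2)⁻¹ := abs_of_pos (by positivity)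
  simp only [e1, e2, e3, e4, e5]
  rw [real_smul, Complex.ofReal_inv, Complex.ofReal_pow]
  have e6 : (((1 - t : ℝ) : ℂ) ^ (2:ℕ))⁻¹ = ((1 - t : ℝ) : ℂ) ^ (-2 : ℂ) := by
    rw [Complex.cpow_neg, ← Complex.cpow_natCast]
    norm_num
  rw [e6]
  have e7 : (1 : ℂ) - (t:ℂ) = ((1 - t : ℝ) : ℂ) := by push_cast; ring
  rw [e7, mul_assoc ((t:ℂ) ^ (p-1)), ← Complex.cpow_add _ _ hz, mul_left_comm,
    ← Complex.cpow_add _ _ hz]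
  congr 1
  ring

lemma exp_two_subst (s ν : ℂ) :
    ∫ x in Ioi (0 : ℝ), (x : ℂ) ^ ((s + ν) / 2 - 1) * ((1 + x : ℝ) : ℂ) ^ (-s) =
      2 * ∫ u : ℝ, Complex.exp ((s + ν) * u) * ((1 + Real.exp (2 * u) : ℝ) : ℂ) ^ (-s) := by
  have himg : (fun u : ℝ => Real.exp (2 * u)) '' univ = Ioi (0 : ℝ) := by
    rw [image_univ]
    ext x
    constructor
    · rintro ⟨u, rfl⟩; exact Real.exp_pos _
    · intro hx
      refine ⟨Real.log x / 2, ?_⟩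
      show Real.exp (2 * (Real.log x / 2)) = x
      rw [show 2 * (Real.log x / 2) = Real.log x by ring, Real.exp_log hx]
  have hderiv : ∀ u ∈ (univ : Set ℝ),
      HasDerivWithinAt (fun u : ℝ => Real.exp (2 * u)) (2 * Real.exp (2 * u)) univ u := by
    intro u _
    have h0 : HasDerivAt (fun y : ℝ => 2 * y) 2 u := by
      simpa using (hasDerivAt_id u).const_mul 2
    have := h0.exp
    rw [mul_comm] at this
    exact this.hasDerivWithinAt
  have hinj : InjOn (fun u : ℝ => Real.exp (2 * u)) univ := by
    intro a _ b _ hab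
    have := Real.exp_injective hab
    linarith
  have key := integral_image_eq_integral_abs_deriv_smul MeasurableSet.univ hderiv hinj
    (fun x : ℝ => (x : ℂ) ^ ((s + ν) / 2 - 1) * ((1 + x : ℝ) : ℂ) ^ (-s))
  rw [himg, Measure.restrict_univ] at key
  rw [key, ← integral_const_mul]
  refine integral_congr_ae (Filter.Eventually.of_forall fun u => ?_)
  dsimp only
  have e1 : |2 * Real.exp (2 * u)| = 2 * Real.exp (2 * u) := abs_of_pos (by positivity)
  rw [e1, real_smul, Complex.ofReal_mul, cpow_real_exp, Complex.ofReal_exp]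
  set B := ((1 + Real.exp (2*u) : ℝ) : ℂ) ^ (-s) with hB
  have e2 : Complex.exp (((s + ν) / 2 - 1) * ((2 * u : ℝ) : ℂ)) =
      Complex.exp ((s + ν) * u) * Complex.exp (-((2 * u : ℝ) : ℂ)) := by
    rw [← Complex.exp_add]; congr 1; push_cast; ring
  have e4 : (↑(2:ℝ) : ℂ) * Complex.exp ((2*u : ℝ) : ℂ) *
      (Complex.exp ((s + ν) * u) * Complex.exp (-((2*u : ℝ) : ℂ)) * B) =
      2 * (Complex.exp ((s + ν) * u) * B) *
        (Complex.exp ((2*u : ℝ) : ℂ) * Complex.exp (-((2*u : ℝ) : ℂ))) := by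
    push_cast; ring
  rw [e2, e4, ← Complex.exp_add, add_neg_cancel, Complex.exp_zero, mul_one]

/-- Mellin transform of the Macdonald–Bessel function in integral form:
for `Re s > |Re ν|`,
`∫₀^∞ y^{s−1} (∫ℝ e^{νu − y·cosh u} du) dy = 2^{s−1} Γ((s+ν)/2) Γ((s−ν)/2)`. -/
theorem bessel_mellin_transform (ν s : ℂ) (h : |ν.re| < s.re) :
    ∫ y in Set.Ioi (0 : ℝ), (y : ℂ) ^ (s - 1) *
        ∫ u : ℝ, Complex.exp (ν * (u : ℂ) - (y : ℂ) * Real.cosh u) =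
      (2 : ℂ) ^ (s - 1) * Complex.Gamma ((s + ν) / 2) * Complex.Gamma ((s - ν) / 2) := by
  obtain ⟨hν1, hν2⟩ := abs_lt.mp h
  have hσ : 0 < s.re := (abs_nonneg ν.re).trans_lt h
  set σ := s.re with hσdef
  set F : ℝ × ℝ → ℂ :=
    fun p => (p.1 : ℂ) ^ (s - 1) * Complex.exp (ν * p.2 - p.1 * Real.cosh p.2) with hF
  -- norm identity
  have hnorm : ∀ u : ℝ, ∀ y ∈ Ioi (0:ℝ), ‖F (y, u)‖ =
      Real.exp (ν.re * u) * (y ^ (σ - 1) * Real.exp (-(Real.cosh u * y))) := by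
    intro u y hy
    rw [hF]
    rw [norm_mul,
      Complex.norm_cpow_eq_rpow_re_of_pos hy, Complex.norm_exp]
    have : (ν * (u:ℂ) - (y:ℂ) * (Real.cosh u : ℂ)).re = ν.re * u - Real.cosh u * y := by
      simp [Complex.sub_re, Complex.mul_re]
      ring
    rw [this, Complex.sub_re, Complex.one_re, Real.exp_sub, Real.exp_neg, div_eq_mul_inv]
    ring
  -- a.e. strong measurability of F on the product
  have hFm : AEStronglyMeasurable F ((volume.restrict (Ioi (0:ℝ))).prod volume) := by
    rw [Measure.restrict_prod_eq_prod_univ]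
    refine ContinuousOn.aestronglyMeasurable ?_ (measurableSet_Ioi.prod MeasurableSet.univ)
    intro p hp
    apply ContinuousAt.continuousWithinAt
    have h1 : ContinuousAt (fun q : ℝ × ℝ => ((q.1 : ℂ)) ^ (s - 1)) p :=
      (continuousAt_ofReal_cpow_const p.1 (s-1) (Or.inr (ne_of_gt hp.1))).comp
        continuousAt_fst
    have h2 : Continuous (fun q : ℝ × ℝ =>
        Complex.exp (ν * q.2 - q.1 * Real.cosh q.2)) := by
      apply Complex.continuous_exp.comp
      apply Continuous.sub
      · exact continuous_const.mul (Complex.continuous_ofReal.comp continuous_snd)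
      · exact (Complex.continuous_ofReal.comp continuous_fst).mul
          (Complex.continuous_ofReal.comp (Real.continuous_cosh.comp continuous_snd))
    exact h1.mul h2.continuousAt
  -- integrability in y for each u
  have hIy : ∀ u : ℝ, Integrable (fun y => F (y, u)) (volume.restrict (Ioi (0:ℝ))) := by
    intro u
    have hg : IntegrableOn
        (fun y : ℝ => Real.exp (ν.re * u) * (y ^ (σ - 1) * Real.exp (-(Real.cosh u * y))))
        (Ioi (0:ℝ)) :=
      (integrableOn_rpow_mul_exp_neg hσ (Real.cosh_pos u)).const_mul _
    refine Integrable.mono' hg ?_ ?_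
    · refine ContinuousOn.aestronglyMeasurable ?_ measurableSet_Ioi
      intro y hy
      apply ContinuousAt.continuousWithinAt
      refine ContinuousAt.mul
        (continuousAt_ofReal_cpow_const y (s-1) (Or.inr (ne_of_gt hy))) ?_
      exact (Complex.continuous_exp.comp (by continuity)).continuousAt
    · refine (ae_restrict_iff' measurableSet_Ioi).mpr (Filter.Eventually.of_forall ?_)
      exact fun y hy => le_of_eq (hnorm u y hy)
  -- exact value of the y-marginal of the norm
  have hmarg : ∀ u : ℝ, (∫ y in Ioi (0:ℝ), ‖F (y, u)‖) =
      Real.exp (ν.re * u) * ((1 / Real.cosh u) ^ σ * Real.Gamma σ) := by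
    intro u
    rw [setIntegral_congr_fun measurableSet_Ioi (fun y hy => hnorm u y hy),
      integral_const_mul, Real.integral_rpow_mul_exp_neg_mul_Ioi hσ (Real.cosh_pos u)]
  -- integrability of the norm-marginal in u
  have hIu : Integrable (fun u : ℝ => ∫ y in Ioi (0:ℝ), ‖F (y, u)‖) volume := by
    have hc : 0 < σ - |ν.re| := by simp only [sub_pos]; exact h
    refine Integrable.mono'
      ((integrable_exp_neg_mul_abs hc).const_mul (Real.Gamma σ * 2 ^ σ)) ?_
      (Filter.Eventually.of_forall fun u => ?_)
    · exact (hFm.norm.prod_swap).integral_prod_right'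
    · have hnn : 0 ≤ ∫ y in Ioi (0:ℝ), ‖F (y, u)‖ :=
        integral_nonneg fun y => norm_nonneg _
      rw [Real.norm_eq_abs, _root_.abs_of_nonneg hnn, hmarg u]
      have hcosh : Real.exp |u| ≤ 2 * Real.cosh u := by
        rw [Real.cosh_eq]
        rcases abs_cases u with ⟨h1, _⟩ | ⟨h1, _⟩ <;> rw [h1] <;>
          [linarith [Real.exp_pos (-u)]; linarith [Real.exp_pos u]]
      have b1 : 1 / Real.cosh u ≤ 2 * Real.exp (-|u|) := by
        rw [div_le_iff₀ (Real.cosh_pos u)]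
        have h2 : Real.exp (-|u|) * Real.exp |u| = 1 := by
          rw [← Real.exp_add, neg_add_cancel, Real.exp_zero]
        nlinarith [Real.exp_pos (-|u|), mul_le_mul_of_nonneg_left hcosh (Real.exp_pos (-|u|)).le]
      have b2 : (1 / Real.cosh u) ^ σ ≤ (2 * Real.exp (-|u|)) ^ σ :=
        Real.rpow_le_rpow (by positivity) b1 hσ.le
      have b3 : (2 * Real.exp (-|u|)) ^ σ = 2 ^ σ * Real.exp (-(σ * |u|)) := by
        rw [Real.mul_rpow (by norm_num) (Real.exp_pos _).le, ← Real.exp_mul]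
        ring_nf
      have b4 : Real.exp (ν.re * u) ≤ Real.exp (|ν.re| * |u|) :=
        Real.exp_le_exp.mpr (le_trans (le_abs_self _) (le_of_eq (abs_mul _ _)))
      have hΓ : 0 ≤ Real.Gamma σ := Real.Gamma_nonneg_of_nonneg hσ.le
      calc Real.exp (ν.re * u) * ((1 / Real.cosh u) ^ σ * Real.Gamma σ)
          ≤ Real.exp (|ν.re| * |u|) * ((2 ^ σ * Real.exp (-(σ * |u|))) * Real.Gamma σ) := by
            refine mul_le_mul b4 (mul_le_mul_of_nonneg_right (b3 ▸ b2) hΓ) (by positivity)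
              (Real.exp_pos _).le
        _ = Real.Gamma σ * 2 ^ σ * Real.exp (-((σ - |ν.re|) * |u|)) := by
            rw [show -((σ - |ν.re|) * |u|) = |ν.re| * |u| + -(σ * |u|) by ring, Real.exp_add]
            ring
  -- integrability of F on the product
  have hIF : Integrable F ((volume.restrict (Ioi (0:ℝ))).prod volume) :=
    (integrable_prod_iff' hFm).mpr ⟨Filter.Eventually.of_forall hIy, hIu⟩
  -- main computation
  have hswap : (∫ y in Ioi (0:ℝ), (y : ℂ) ^ (s - 1) *
        ∫ u : ℝ, Complex.exp (ν * (u : ℂ) - (y : ℂ) * Real.cosh u)) =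
      ∫ u : ℝ, ∫ y in Ioi (0:ℝ), F (y, u) := by
    rw [← integral_integral_swap hIF]
    refine setIntegral_congr_fun measurableSet_Ioi fun y hy => ?_
    rw [← integral_const_mul]
  rw [hswap]
  have hinner : ∀ u : ℝ, (∫ y in Ioi (0:ℝ), F (y, u)) =
      Complex.exp (ν * u) * ((1 / (Real.cosh u : ℂ)) ^ s * Complex.Gamma s) := by
    intro u
    have e : ∀ y : ℝ, y ∈ Ioi (0:ℝ) → F (y, u) =
        Complex.exp (ν * u) * ((y : ℂ) ^ (s - 1) *
          Complex.exp (-((Real.cosh u : ℝ) * (y : ℂ)))) := by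
      intro y _
      rw [hF]
      dsimp only
      rw [show ν * (u:ℂ) - (y:ℂ) * (Real.cosh u : ℝ) =
        ν * u + -((Real.cosh u : ℝ) * (y:ℂ)) by push_cast; ring, Complex.exp_add]
      ring
    rw [setIntegral_congr_fun measurableSet_Ioi e, integral_const_mul,
      integral_cpow_mul_exp_neg_mul_Ioi hσ (Real.cosh_pos u)]
  rw [integral_congr_ae (Filter.Eventually.of_forall hinner)]
  have hstep4 : ∀ u : ℝ, Complex.exp (ν * u) * ((1 / (Real.cosh u : ℂ)) ^ s * Complex.Gamma s)
      = Complex.Gamma s * (((2:ℝ) : ℂ) ^ s *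
        (Complex.exp ((s + ν) * u) * ((1 + Real.exp (2 * u) : ℝ) : ℂ) ^ (-s))) := by
    intro u
    have h1 : Real.exp u * Real.exp (-u) = 1 := by
      rw [← Real.exp_add, add_neg_cancel, Real.exp_zero]
    have h2 : Real.exp u * Real.exp u = Real.exp (2 * u) := by
      rw [← Real.exp_add]; ring_nf
    have hpos : (0:ℝ) < 1 + Real.exp (2 * u) := by positivity
    have hr : (Real.cosh u)⁻¹ = 2 * Real.exp u * (1 + Real.exp (2 * u))⁻¹ := by
      rw [Real.cosh_eq]
      rw [← h2]
      field_simp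
      nlinarith [h1]
    rw [one_div, ← Complex.ofReal_inv, hr, Complex.ofReal_mul (2 * Real.exp u),
      Complex.mul_cpow_ofReal_nonneg (by positivity) (by positivity),
      Complex.ofReal_mul 2,
      Complex.mul_cpow_ofReal_nonneg (by norm_num) (Real.exp_pos u).le,
      cpow_real_exp, cpow_real_inv hpos]
    have hE : Complex.exp (ν * u) * Complex.exp (s * u) = Complex.exp ((s + ν) * u) := by
      rw [← Complex.exp_add]; ring_nf
    rw [← hE]
    ring
  rw [integral_congr_ae (Filter.Eventually.of_forall hstep4), integral_const_mul,
    integral_const_mul]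
  -- beta
  have hbeta := beta_Ioi ((s + ν) / 2) ((s - ν) / 2)
  have hpq : (s + ν) / 2 + (s - ν) / 2 = s := by ring
  rw [hpq] at hbeta
  have hJ : (∫ u : ℝ, Complex.exp ((s + ν) * u) * ((1 + Real.exp (2 * u) : ℝ) : ℂ) ^ (-s))
      = 2⁻¹ * Complex.betaIntegral ((s + ν) / 2) ((s - ν) / 2) := by
    have h2 := (exp_two_subst s ν).symm.trans hbeta
    rw [← h2]
    ring
  rw [hJ]
  have hp : 0 < ((s + ν) / 2).re := by
    rw [show (s + ν) / 2 = (s + ν) * (2⁻¹ : ℝ) by push_cast; ring]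
    rw [Complex.mul_re]
    simp only [Complex.ofReal_re, Complex.ofReal_im, Complex.add_re]
    norm_num
    linarith
  have hq : 0 < ((s - ν) / 2).re := by
    rw [show (s - ν) / 2 = (s - ν) * (2⁻¹ : ℝ) by push_cast; ring]
    rw [Complex.mul_re]
    simp only [Complex.ofReal_re, Complex.ofReal_im, Complex.sub_re]
    norm_num
    linarith
  have hGG := Complex.Gamma_mul_Gamma_eq_betaIntegral hp hq
  rw [hpq] at hGG
  have h2s : ((2:ℝ) : ℂ) ^ s = (2:ℂ) ^ (s - 1) * 2 := by
    have := Complex.cpow_add (x := (2:ℂ)) (s - 1) 1 (two_ne_zero : (2:ℂ) ≠ 0)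
    rw [Complex.cpow_one, sub_add_cancel] at this
    rw [show ((2:ℝ) : ℂ) = (2:ℂ) by norm_num, ← this]
  rw [h2s]
  have h22 : (2:ℂ) * (2⁻¹ * Complex.betaIntegral ((s + ν) / 2) ((s - ν) / 2))
      = Complex.betaIntegral ((s + ν) / 2) ((s - ν) / 2) := by
    rw [← mul_assoc, mul_inv_cancel₀ (two_ne_zero : (2:ℂ) ≠ 0), one_mul]
  rw [mul_assoc ((2:ℂ) ^ (s - 1)), h22]
  linear_combination -(2:ℂ) ^ (s - 1) * hGG
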